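/- arXiv:2402.07929 — 4 statements merged into one kernel-verified Lean document; each statement's English description precedes it below -/
import Mathlib

section
/- Let j be a positive integer not divisible by 10 and let b, c be positive integers, and set a = j·10^c. Then the minimum of the 2-adic valuation and the 5-adic valuation of ᵇa equals c·(ᵇ⁻¹a). -/
/-- Integer tetration: `tet a 0 = 1`, `tet a (b+1) = a ^ tet a b`. -/
def tet (a : ℕ) : ℕ → ℕ
  | 0 => 1
  | b + 1 => a ^ tet a b

theorem stmt_3 (j b c : ℕ) (hj : 0 < j) (hj10 : ¬ (10 ∣ j)) (hb : 0 < b) (hc : 0 < c) :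
    min (padicValNat 2 (tet (j * 10 ^ c) b)) (padicValNat 5 (tet (j * 10 ^ c) b)) =
      c * tet (j * 10 ^ c) (b - 1) := by
  obtain ⟨b', rfl⟩ : ∃ b', b = b' + 1 := ⟨b - 1, by omega⟩
  simp only [Nat.add_sub_cancel]
  set a := j * 10 ^ c with ha
  have ha0 : a ≠ 0 := by positivity
  set n := tet a b' with hn
  have htet : tet a (b' + 1) = a ^ n := rfl
  have h2 : (2 : ℕ).Prime := Nat.prime_two
  have h5 : (5 : ℕ).Prime := by norm_num
  have hv2 : padicValNat 2 a = padicValNat 2 j + c := by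
    rw [ha, padicValNat.mul (by omega) (by positivity), padicValNat.pow 10 c]
    have : padicValNat 2 10 = 1 := by
      have : (10 : ℕ) = 2 * 5 := by norm_num
      rw [this, padicValNat.mul (by norm_num) (by norm_num),
        padicValNat.self (by norm_num), padicValNat.eq_zero_of_not_dvd (by norm_num)]
    rw [this, Nat.mul_one]
  have hv5 : padicValNat 5 a = padicValNat 5 j + c := by
    haveI : Fact (Nat.Prime 5) := ⟨h5⟩
    rw [ha, padicValNat.mul (by omega) (by positivity), padicValNat.pow 10 c]
    have : padicValNat 5 10 = 1 := by
      have : (10 : ℕ) = 5 * 2 := by norm_num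
      rw [this, padicValNat.mul (by norm_num) (by norm_num),
        padicValNat.self (by norm_num), padicValNat.eq_zero_of_not_dvd (by norm_num)]
    rw [this, Nat.mul_one]
  have hmin : padicValNat 2 j = 0 ∨ padicValNat 5 j = 0 := by
    by_contra h
    push_neg at h
    have h2d : 2 ∣ j := by
      by_contra hd
      exact h.1 (padicValNat.eq_zero_of_not_dvd hd)
    have h5d : 5 ∣ j := by
      by_contra hd
      exact h.2 (padicValNat.eq_zero_of_not_dvd hd)
    exact hj10 (Nat.Coprime.mul_dvd_of_dvd_of_dvd (by norm_num) h2d h5d)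
  haveI : Fact (Nat.Prime 5) := ⟨h5⟩
  rw [htet, padicValNat.pow a n, padicValNat.pow a n]
  rw [hv2, hv5]
  rcases hmin with h | h <;> rw [h, Nat.zero_add]
  · calc min (n * c) (n * (padicValNat 5 j + c)) = n * c :=
          min_eq_left (Nat.mul_le_mul_left n (by omega))
      _ = c * n := Nat.mul_comm n c
  · rw [Nat.min_comm]
    calc min (n * c) (n * (padicValNat 2 j + c)) = n * c :=
          min_eq_left (Nat.mul_le_mul_left n (by omega))
      _ = c * n := Nat.mul_comm n c
end

section
/- Let j be a positive integer not divisible by 10 and let c be a positive integer, and set a = j·10^c. For every positive integer b, the largest natural number k such that ᵇ⁺¹a ≡ ᵇa (mod 10^k) (i.e., the number of rightmost decimal digits shared by ᵇa and ᵇ⁺¹a) equals c·(ᵇ⁻¹a). -/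
theorem stmt_6 (j c : ℕ) (hj : 0 < j) (hj10 : ¬ (10 ∣ j)) (hc : 0 < c)
    (b : ℕ) (hb : 0 < b) :
    IsGreatest {k : ℕ | tet (j * 10 ^ c) (b + 1) ≡ tet (j * 10 ^ c) b [MOD 10 ^ k]}
      (c * tet (j * 10 ^ c) (b - 1)) := by
  set a := j * 10 ^ c with ha
  have h10 : 10 ≤ 10 ^ c := by
    calc (10:ℕ) = 10 ^ 1 := (pow_one 10).symm
    _ ≤ 10 ^ c := Nat.pow_le_pow_right (by norm_num) hc
  have ha10 : 10 ≤ a := le_trans h10 (Nat.le_mul_of_pos_left _ hj)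
  have ha2 : 1 < a := by omega
  set T := tet a (b - 1) with hT
  have hTb : tet a b = a ^ T := by
    conv_lhs => rw [show b = (b - 1) + 1 from (Nat.succ_pred_eq_of_pos hb).symm]
    rfl
  have hTb1 : tet a (b + 1) = a ^ (a ^ T) := by
    show a ^ tet a b = _
    rw [hTb]
  have hTlt : T < a ^ T := Nat.lt_pow_self (n := T) ha2
  set d := a ^ T - T with hd
  have hdpos : 0 < d := by omega
  have haT : a ^ T = j ^ T * 10 ^ (c * T) := by
    rw [ha, mul_pow, ← pow_mul]
  have hsplit : a ^ (a ^ T) = a ^ T * a ^ d := by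
    rw [← pow_add]
    congr 1
    omega
  have hadpos : 1 ≤ a ^ d := Nat.one_le_pow _ _ (by omega)
  set u := j ^ T * (a ^ d - 1) with hu
  have key : a ^ (a ^ T) - a ^ T = 10 ^ (c * T) * u := by
    rw [hsplit, ← Nat.mul_sub_one, haT]
    ring_nf
    rfl
  have hle : a ^ T ≤ a ^ (a ^ T) := Nat.pow_le_pow_right (le_of_lt ha2) (le_of_lt hTlt)
  have h10a : (10:ℕ) ∣ a := by
    rw [ha]
    exact Dvd.dvd.mul_left (dvd_pow_self 10 hc.ne') j
  have h10ad : 10 ∣ a ^ d := dvd_pow h10a hdpos.ne'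
  have hu10 : ¬ 10 ∣ u := by
    intro h
    have h2 : (2:ℕ) ∣ u := dvd_trans (by norm_num) h
    have h5 : (5:ℕ) ∣ u := dvd_trans (by norm_num) h
    have hx2 : ¬ (2:ℕ) ∣ (a ^ d - 1) := by
      have : (2:ℕ) ∣ a ^ d := dvd_trans (by norm_num) h10ad
      intro hc2
      obtain ⟨m, hm⟩ := this
      obtain ⟨n, hn⟩ := hc2
      omega
    have hx5 : ¬ (5:ℕ) ∣ (a ^ d - 1) := by
      have : (5:ℕ) ∣ a ^ d := dvd_trans (by norm_num) h10ad
      intro hc5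
      obtain ⟨m, hm⟩ := this
      obtain ⟨n, hn⟩ := hc5
      omega
    have h2j : (2:ℕ) ∣ j := by
      rcases (Nat.Prime.dvd_mul (by norm_num)).mp h2 with h' | h'
      · exact Nat.Prime.dvd_of_dvd_pow (by norm_num) h'
      · exact absurd h' hx2
    have h5j : (5:ℕ) ∣ j := by
      rcases (Nat.Prime.dvd_mul (by norm_num)).mp h5 with h' | h'
      · exact Nat.Prime.dvd_of_dvd_pow (by norm_num) h'
      · exact absurd h' hx5
    exact hj10 (by omega)
  constructor
  · show tet a (b + 1) ≡ tet a b [MOD 10 ^ (c * T)]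
    rw [hTb, hTb1]
    refine ((Nat.modEq_iff_dvd' hle).mpr ?_).symm
    exact ⟨u, key⟩
  · intro k hk
    have hk' : 10 ^ k ∣ 10 ^ (c * T) * u := by
      rw [← key]
      exact (Nat.modEq_iff_dvd' hle).mp ((hTb ▸ hTb1 ▸ hk : _).symm)
    by_contra hlt
    push_neg at hlt
    have : 10 ^ (c * T) * 10 ∣ 10 ^ (c * T) * u := by
      refine dvd_trans ?_ hk'
      rw [← pow_succ]
      exact pow_dvd_pow 10 (by omega)
    have := (Nat.mul_dvd_mul_iff_left (Nat.pow_pos (by norm_num) : 0 < 10 ^ (c * T))).mp this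
    exact hu10 this
end

section
/- Let j be a positive integer not divisible by 10 and let c be a positive integer, and set a = j·10^c. For every integer b ≥ 2, the congruence speed of a at height b equals c·(ᵇ⁻¹a − ᵇ⁻²a); that is, (the largest k with ᵇ⁺¹a ≡ ᵇa (mod 10^k)) minus (the largest k with ᵇa ≡ ᵇ⁻¹a (mod 10^k)) equals c·(ᵇ⁻¹a − ᵇ⁻²a). -/
/-- The number of rightmost decimal digits shared by `x` and `y`, i.e. the
largest `k` such that `x ≡ y (mod 10^k)`. -/
noncomputable def sharedDigits (x y : ℕ) : ℕ := sSup {k : ℕ | x ≡ y [MOD 10 ^ k]}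

/-- The congruence speed of `a` at height `b ≥ 1`. -/
noncomputable def congSpeed (a b : ℕ) : ℤ :=
  (sharedDigits (tet a (b + 1)) (tet a b) : ℤ) - (sharedDigits (tet a b) (tet a (b - 1)) : ℤ)

lemma sharedDigits_eq (x y m : ℕ) (hxy : y ≤ x)
    (h1 : 10 ^ m ∣ x - y) (h2 : ¬ 10 ^ (m + 1) ∣ x - y) :
    sharedDigits x y = m := by
  have hset : {k : ℕ | x ≡ y [MOD 10 ^ k]} = Set.Iic m := by
    ext k
    simp only [Set.mem_setOf_eq, Set.mem_Iic]
    rw [Nat.ModEq.comm, Nat.modEq_iff_dvd' hxy]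
    constructor
    · intro hk
      by_contra hkm
      push_neg at hkm
      exact h2 (dvd_trans (pow_dvd_pow 10 hkm) hk)
    · intro hk
      exact dvd_trans (pow_dvd_pow 10 hk) h1
  rw [sharedDigits, hset, csSup_Iic]

lemma tet_lt (a : ℕ) (ha : 2 ≤ a) (n : ℕ) : tet a n < tet a (n + 1) := by
  show tet a n < a ^ tet a n
  calc tet a n < 2 ^ tet a n := Nat.lt_two_pow_self
    _ ≤ a ^ tet a n := Nat.pow_le_pow_left ha _

lemma key (j c : ℕ) (hj : 0 < j) (hj10 : ¬ (10 ∣ j)) (hc : 0 < c) (m : ℕ) :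
    sharedDigits (tet (j * 10 ^ c) (m + 2)) (tet (j * 10 ^ c) (m + 1))
      = c * tet (j * 10 ^ c) m := by
  set a := j * 10 ^ c with ha
  have ha2 : 2 ≤ a := by
    have : 10 ^ 1 ≤ 10 ^ c := Nat.pow_le_pow_right (by norm_num) hc
    calc 2 ≤ 1 * 10 ^ c := by omega
      _ ≤ j * 10 ^ c := Nat.mul_le_mul_right _ hj
  have h10a : 10 ∣ a := by
    have : (10:ℕ) ^ 1 ∣ 10 ^ c := pow_dvd_pow 10 hc
    simpa using Dvd.dvd.mul_left (by simpa using this) j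
  set s := tet a m with hs
  set t := tet a (m + 1) with ht
  have hst : s < t := tet_lt a ha2 m
  have htet1 : tet a (m + 1) = a ^ s := rfl
  have htet2 : tet a (m + 2) = a ^ t := rfl
  have hle : tet a (m + 1) ≤ tet a (m + 2) := le_of_lt (tet_lt a ha2 (m + 1))
  -- the difference
  have hdiff : tet a (m + 2) - tet a (m + 1)
      = 10 ^ (c * s) * (j ^ s * (a ^ (t - s) - 1)) := by
    rw [htet1, htet2]
    have h1 : a ^ t = a ^ s * a ^ (t - s) := by
      rw [← pow_add]
      congr 1
      omega
    have has : a ^ s = j ^ s * 10 ^ (c * s) := by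
      rw [ha, mul_pow, ← pow_mul]
    have ha1 : 1 ≤ a ^ (t - s) := Nat.one_le_pow _ _ (by omega)
    calc a ^ t - a ^ s = a ^ s * (a ^ (t - s) - 1) := by
          rw [h1, Nat.mul_sub, mul_one]
      _ = 10 ^ (c * s) * (j ^ s * (a ^ (t - s) - 1)) := by rw [has]; ring
  apply sharedDigits_eq _ _ _ hle
  · rw [hdiff]; exact dvd_mul_right _ _
  · rw [hdiff]
    intro hdvd
    rw [pow_succ] at hdvd
    have hu : 10 ∣ j ^ s * (a ^ (t - s) - 1) :=
      (Nat.mul_dvd_mul_iff_left (pow_pos (by norm_num : (0:ℕ) < 10) (c * s))).mp hdvd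
    have hak : 10 ∣ a ^ (t - s) := dvd_pow h10a (by omega)
    have ha1 : 1 ≤ a ^ (t - s) := Nat.one_le_pow _ _ (by omega)
    have hp : ∀ p : ℕ, p.Prime → p ∣ 10 → p ∣ j := by
      intro p hpp hp10
      have hpu : p ∣ j ^ s * (a ^ (t - s) - 1) := hp10.trans hu
      rcases (Nat.Prime.dvd_mul hpp).mp hpu with h | h
      · exact hpp.dvd_of_dvd_pow h
      · exfalso
        have h1 : p ∣ a ^ (t - s) := hp10.trans hak
        have h2 : p ∣ a ^ (t - s) - (a ^ (t - s) - 1) := Nat.dvd_sub h1 h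
        have heq : a ^ (t - s) - (a ^ (t - s) - 1) = 1 := by omega
        rw [heq] at h2
        exact hpp.one_lt.ne' (Nat.dvd_one.mp h2)
    have h2j := hp 2 Nat.prime_two (by norm_num)
    have h5j := hp 5 Nat.prime_five (by norm_num)
    exact hj10 (Nat.Coprime.mul_dvd_of_dvd_of_dvd (by norm_num) h2j h5j)

theorem stmt_7 (j c : ℕ) (hj : 0 < j) (hj10 : ¬ (10 ∣ j)) (hc : 0 < c)
    (b : ℕ) (hb : 2 ≤ b) :
    congSpeed (j * 10 ^ c) b =
      (c : ℤ) * ((tet (j * 10 ^ c) (b - 1) : ℤ) - (tet (j * 10 ^ c) (b - 2) : ℤ)) := by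
  obtain ⟨m, rfl⟩ : ∃ m, b = m + 2 := ⟨b - 2, by omega⟩
  have h1 := key j c hj hj10 hc (m + 1)
  have h2 := key j c hj hj10 hc m
  simp only [congSpeed, show m + 2 + 1 = m + 1 + 2 from rfl,
    show m + 2 - 1 = m + 1 from rfl, show m + 2 - 2 = m from rfl] at *
  rw [h1, h2]
  push_cast
  ring
end

section
/- Let j be a positive integer not divisible by 10 and let c be a positive integer, and set a = j·10^c. The congruence speed of a at height 1 equals c; that is, (the largest k with ²a ≡ ¹a (mod 10^k)) minus (the largest k with ¹a ≡ ⁰a (mod 10^k)) equals c. -/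
lemma sharedDigits_eq_of (x y n : ℕ) (h1 : x ≡ y [MOD 10 ^ n])
    (h2 : ¬ x ≡ y [MOD 10 ^ (n + 1)]) : sharedDigits x y = n := by
  have hset : {k : ℕ | x ≡ y [MOD 10 ^ k]} = Set.Iic n := by
    ext k
    simp only [Set.mem_setOf_eq, Set.mem_Iic]
    constructor
    · intro hk
      by_contra hkn
      push_neg at hkn
      exact h2 (hk.of_dvd (pow_dvd_pow 10 hkn))
    · intro hk
      exact h1.of_dvd (pow_dvd_pow 10 hk)
  rw [sharedDigits, hset, csSup_Iic]

lemma not_pow_dvd (j c p q : ℕ) (hpq : p * q = 10) (hpj : ¬ p ∣ j)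
    (hp : p.Prime) : ¬ p ^ (c + 1) ∣ j * 10 ^ c := by
  intro h
  have ha : j * 10 ^ c = p ^ c * (j * q ^ c) := by
    rw [← hpq]; ring
  rw [ha, pow_succ] at h
  have h2 : p ∣ j * q ^ c :=
    (Nat.mul_dvd_mul_iff_left (pow_pos hp.pos c)).mp h
  rcases (hp.dvd_mul).mp h2 with h3 | h3
  · exact hpj h3
  · have hq : p ∣ q := hp.dvd_of_dvd_pow h3
    have hp2 : 2 ≤ p := hp.two_le
    rcases hq with ⟨r, rfl⟩
    have hr : 1 ≤ r := by
      rcases Nat.eq_zero_or_pos r with h0 | h0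
      · simp [h0] at hpq
      · exact h0
    have hpp : p * p ≤ 10 := by
      calc p * p ≤ p * (p * r) := Nat.mul_le_mul_left p (Nat.le_mul_of_pos_right p hr)
        _ = 10 := hpq
    have hp3 : p ≤ 3 := by nlinarith
    interval_cases p <;> omega

theorem stmt_8 (j c : ℕ) (hj : 0 < j) (hj10 : ¬ (10 ∣ j)) (hc : 0 < c) :
    (sharedDigits (tet (j * 10 ^ c) 2) (tet (j * 10 ^ c) 1) : ℤ) -
      (sharedDigits (tet (j * 10 ^ c) 1) (tet (j * 10 ^ c) 0) : ℤ) = (c : ℤ) := by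
  set a := j * 10 ^ c with ha
  have h10a : 10 ∣ a := Dvd.dvd.mul_left (dvd_pow_self 10 hc.ne') j
  have ha1 : 1 ≤ a := le_trans (by norm_num) (Nat.le_of_dvd (by positivity) h10a)
  have hca : c + 1 ≤ a := by
    have h1 : c < 10 ^ c := Nat.lt_pow_self (by norm_num : 1 < 10)
    have h2 : 10 ^ c ≤ a := Nat.le_mul_of_pos_left _ hj
    omega
  have htet0 : tet a 0 = 1 := rfl
  have htet1 : tet a 1 = a := by simp [tet]
  have htet2 : tet a 2 = a ^ a := by
    show a ^ tet a 1 = a ^ a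
    rw [htet1]
  have hca10 : 10 ^ c ∣ a := Dvd.dvd.mul_left dvd_rfl j
  -- sharedDigits a 1 = 0
  have hs1 : sharedDigits (tet a 1) (tet a 0) = 0 := by
    rw [htet1, htet0]
    apply sharedDigits_eq_of
    · simp [Nat.modEq_one]
    · intro h
      have h0 : a % 10 = 0 := by
        have := (Nat.modEq_zero_iff_dvd).mpr h10a
        simpa [Nat.ModEq] using this
      have h1 : a % 10 ^ 1 = 1 % 10 ^ 1 := h
      simp [pow_one] at h1
      omega
  have hs2 : sharedDigits (tet a 2) (tet a 1) = c := by
    rw [htet2, htet1]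
    apply sharedDigits_eq_of
    · have d1 : 10 ^ c ∣ a ^ a := hca10.trans (dvd_pow_self a (by omega))
      exact ((Nat.modEq_zero_iff_dvd).mpr d1).trans ((Nat.modEq_zero_iff_dvd).mpr hca10).symm
    · intro h
      have key : ∀ p q : ℕ, p * q = 10 → p.Prime → ¬ p ∣ j → False := by
        intro p q hpq hp hpj
        have hd : (p : ℕ) ^ (c + 1) ∣ 10 ^ (c + 1) :=
          pow_dvd_pow_of_dvd ⟨q, hpq.symm⟩ _
        have h' := h.of_dvd hd
        have hpa : p ^ (c + 1) ∣ a ^ a := by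
          have : p ^ (c + 1) ∣ a ^ (c + 1) :=
            pow_dvd_pow_of_dvd (dvd_trans ⟨q, hpq.symm⟩ h10a) _
          exact this.trans (pow_dvd_pow a hca)
        have hfin : p ^ (c + 1) ∣ a :=
          (Nat.modEq_zero_iff_dvd).mp (h'.symm.trans ((Nat.modEq_zero_iff_dvd).mpr hpa))
        exact not_pow_dvd j c p q hpq hpj hp hfin
      rcases Decidable.em (2 ∣ j) with h2 | h2
      · rcases Decidable.em (5 ∣ j) with h5 | h5
        · exact hj10 ((Nat.Coprime.mul_dvd_of_dvd_of_dvd (by norm_num) h2 h5))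
        · exact key 5 2 (by norm_num) (by norm_num) h5
      · exact key 2 5 (by norm_num) (by norm_num) h2
  rw [hs1, hs2]
  simp
end
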